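/- arXiv:2001.08519 — 3 statements merged into one kernel-verified Lean document; each statement's English description precedes it below -/
import Mathlib

section
/- For 1 ≤ p, q ≤ ∞, if a sequence D = (d(j₁,j₂)) over Z × Z^d belongs to ℓ^{p,q} and f belongs to the amalgam space L^{p,q}-script (i.e. ‖ ‖Σ_{j₂}|f(x₁+j₁, x₂+j₂)| ‖_{L^q_{x₂}([0,1]^d)} summed appropriately in j₁ has finite L^p([0,1]) norm), then the semi-convolution f ∗' D = Σ_{j₁,j₂} d(j₁,j₂) f(·−j₁,·−j₂) satisfies ‖f ∗' D‖_{L^{p,q}} ≤ ‖D‖_{ℓ^{p,q}} ‖f‖_{𝓛^{p,q}}. -/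
open MeasureTheory ENNReal Filter

noncomputable section

abbrev Zd (d : ℕ) := Fin d → ℤ
abbrev Rd (d : ℕ) := Fin d → ℝ

/-- coercion of an integer lattice point to `ℝ^d` -/
def zcast {d : ℕ} (j : Zd d) : Rd d := fun i => (j i : ℝ)

/-- the `L^p` "norm" (valued in `ℝ≥0∞`) of an `ℝ≥0∞`-valued function w.r.t. a measure -/
def mnorm (p : ℝ≥0∞) {α : Type*} [MeasurableSpace α] (μ : Measure α) (g : α → ℝ≥0∞) : ℝ≥0∞ :=
  if p = ∞ then essSup g μ else (∫⁻ x, g x ^ p.toReal ∂μ) ^ (1 / p.toReal)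

/-- the `ℓ^p` "norm" of an `ℝ≥0∞`-valued sequence -/
def dnorm (p : ℝ≥0∞) {ι : Type*} (c : ι → ℝ≥0∞) : ℝ≥0∞ :=
  if p = ∞ then ⨆ i, c i else (∑' i, c i ^ p.toReal) ^ (1 / p.toReal)

/-- the mixed Lebesgue norm `‖ ‖f(x₁,·)‖_{L^q(ℝ^d)} ‖_{L^p(ℝ)}` -/
def mixedLpq {d : ℕ} (p q : ℝ≥0∞) (f : ℝ × Rd d → ℂ) : ℝ≥0∞ :=
  mnorm p volume (fun x₁ => mnorm q volume (fun x₂ => (‖f (x₁, x₂)‖₊ : ℝ≥0∞)))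

/-- the mixed sequence norm `ℓ^{p,q}(ℤ × ℤ^d)` -/
def lpq {d : ℕ} (p q : ℝ≥0∞) (D : ℤ × Zd d → ℂ) : ℝ≥0∞ :=
  dnorm p (fun j₁ : ℤ => dnorm q (fun j₂ : Zd d => (‖D (j₁, j₂)‖₊ : ℝ≥0∞)))

def cube (d : ℕ) : Set (Rd d) := Set.Icc 0 1

/-- the amalgam norm `𝓛^{p,q}` -/
def amal {d : ℕ} (p q : ℝ≥0∞) (f : ℝ × Rd d → ℂ) : ℝ≥0∞ :=
  mnorm p (volume.restrict (Set.Icc (0:ℝ) 1)) (fun x₁ =>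
    ∑' j₁ : ℤ, mnorm q (volume.restrict (cube d)) (fun x₂ =>
      ∑' j₂ : Zd d, (‖f (x₁ + (j₁:ℝ), x₂ + zcast j₂)‖₊ : ℝ≥0∞)))

/-- the Wiener amalgam norm `W(L^{1,1})` -/
def wiener {d : ℕ} (f : ℝ × Rd d → ℂ) : ℝ≥0∞ :=
  ∑' j₁ : ℤ, ⨆ x₁ : Set.Icc (0:ℝ) 1, ∑' j₂ : Zd d, ⨆ x₂ : cube d,
    (‖f ((x₁:ℝ) + (j₁:ℝ), (x₂:Rd d) + zcast j₂)‖₊ : ℝ≥0∞)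

/-- the semi-convolution `f ∗' D` -/
def semiConv {d : ℕ} (f : ℝ × Rd d → ℂ) (D : ℤ × Zd d → ℂ) : ℝ × Rd d → ℂ :=
  fun x => ∑' j : ℤ × Zd d, D j * f (x.1 - (j.1:ℝ), x.2 - zcast j.2)

/-! ### Auxiliary lemmas -/

section Aux

variable {α : Type*} [MeasurableSpace α] {μ : Measure α} {ι : Type*}

lemma toReal_pos' {p : ℝ≥0∞} (hp : 1 ≤ p) (hp' : p ≠ ∞) : 0 < p.toReal := by
  have : (1:ℝ≥0∞).toReal ≤ p.toReal := ENNReal.toReal_mono hp' hp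
  simpa using lt_of_lt_of_le one_pos (by simpa using this)

lemma one_le_toReal' {p : ℝ≥0∞} (hp : 1 ≤ p) (hp' : p ≠ ∞) : 1 ≤ p.toReal := by
  have := ENNReal.toReal_mono hp' hp; simpa using this

lemma mnorm_mono {p : ℝ≥0∞} {F G : α → ℝ≥0∞} (h : ∀ x, F x ≤ G x) :
    mnorm p μ F ≤ mnorm p μ G := by
  unfold mnorm
  split
  · exact essSup_mono_ae (Eventually.of_forall h)
  · exact ENNReal.rpow_le_rpow (lintegral_mono fun x => ENNReal.rpow_le_rpow (h x)
      ENNReal.toReal_nonneg) (by positivity)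

lemma dnorm_mono {p : ℝ≥0∞} {F G : ι → ℝ≥0∞} (h : ∀ x, F x ≤ G x) :
    dnorm p F ≤ dnorm p G := by
  unfold dnorm
  split
  · exact iSup_mono h
  · exact ENNReal.rpow_le_rpow (ENNReal.tsum_le_tsum fun x => ENNReal.rpow_le_rpow (h x)
      ENNReal.toReal_nonneg) (by positivity)

lemma rpow_rpow_inv' {p : ℝ≥0∞} (hp : 1 ≤ p) (hp' : p ≠ ∞) (x : ℝ≥0∞) :
    (x ^ p.toReal) ^ (1 / p.toReal) = x := by
  rw [← ENNReal.rpow_mul, mul_one_div, div_self (toReal_pos' hp hp').ne', ENNReal.rpow_one]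

lemma dnorm_const_mul {p : ℝ≥0∞} (hp : 1 ≤ p) (c : ℝ≥0∞) (F : ι → ℝ≥0∞) :
    dnorm p (fun i => c * F i) = c * dnorm p F := by
  unfold dnorm
  split
  · exact (ENNReal.mul_iSup (a := c) (f := F)).symm
  · next hne =>
    simp_rw [ENNReal.mul_rpow_of_nonneg _ _ ENNReal.toReal_nonneg, ENNReal.tsum_mul_left,
      ENNReal.mul_rpow_of_nonneg _ _ (by positivity : (0:ℝ) ≤ 1 / p.toReal),
      rpow_rpow_inv' hp hne]

lemma mnorm_const_mul {p : ℝ≥0∞} (hp : 1 ≤ p) {c : ℝ≥0∞} (hc : c ≠ ∞) (F : α → ℝ≥0∞) :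
    mnorm p μ (fun x => c * F x) = c * mnorm p μ F := by
  unfold mnorm
  split
  · exact ENNReal.essSup_const_mul
  · next hne =>
    simp_rw [ENNReal.mul_rpow_of_nonneg _ _ ENNReal.toReal_nonneg,
      lintegral_const_mul' _ _ (ENNReal.rpow_ne_top_of_nonneg ENNReal.toReal_nonneg hc),
      ENNReal.mul_rpow_of_nonneg _ _ (by positivity : (0:ℝ) ≤ 1 / p.toReal),
      rpow_rpow_inv' hp hne]

lemma le_dnorm {p : ℝ≥0∞} (hp : 1 ≤ p) (F : ι → ℝ≥0∞) (i : ι) : F i ≤ dnorm p F := by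
  unfold dnorm
  split
  · exact le_iSup F i
  · next hne =>
    calc F i = ((F i) ^ p.toReal) ^ (1/p.toReal) := (rpow_rpow_inv' hp hne _).symm
    _ ≤ _ := ENNReal.rpow_le_rpow (ENNReal.le_tsum i) (by positivity)

lemma iSup_rpow {κ : Sort*} (a : κ → ℝ≥0∞) {t : ℝ} (ht : 0 < t) :
    (⨆ i, a i) ^ t = ⨆ i, (a i) ^ t := by
  refine le_antisymm ?_ (iSup_le fun i => ENNReal.rpow_le_rpow (le_iSup a i) ht.le)
  have h1 : ∀ i, a i ≤ (⨆ j, (a j) ^ t) ^ (1/t) := fun i => by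
    calc a i = ((a i) ^ t) ^ (1/t) := by
          rw [← ENNReal.rpow_mul, mul_one_div, div_self ht.ne', ENNReal.rpow_one]
    _ ≤ _ := ENNReal.rpow_le_rpow (le_iSup (fun j => (a j)^t) i) (by positivity)
  calc (⨆ i, a i) ^ t ≤ ((⨆ j, (a j) ^ t) ^ (1/t)) ^ t :=
        ENNReal.rpow_le_rpow (iSup_le h1) ht.le
  _ = _ := by rw [← ENNReal.rpow_mul, one_div, inv_mul_cancel₀ ht.ne', ENNReal.rpow_one]

lemma lintegral_Lp_sum_le {t : ℝ} (ht : 1 ≤ t) (F : ι → α → ℝ≥0∞)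
    (hF : ∀ i, AEMeasurable (F i) μ) (s : Finset ι) :
    (∫⁻ x, (∑ i ∈ s, F i x) ^ t ∂μ) ^ (1/t) ≤ ∑ i ∈ s, (∫⁻ x, F i x ^ t ∂μ) ^ (1/t) := by
  classical
  induction s using Finset.induction with
  | empty =>
    simp only [Finset.sum_empty]
    rw [ENNReal.zero_rpow_of_pos (by linarith), lintegral_zero,
      ENNReal.zero_rpow_of_pos (by positivity)]
  | insert a s hi ih =>
    simp only [Finset.sum_insert hi]
    calc (∫⁻ x, (F a x + ∑ i ∈ s, F i x) ^ t ∂μ) ^ (1/t)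
        ≤ (∫⁻ x, F a x ^ t ∂μ) ^ (1/t) + (∫⁻ x, (∑ i ∈ s, F i x) ^ t ∂μ) ^ (1/t) :=
          ENNReal.lintegral_Lp_add_le (hF a) (Finset.aemeasurable_fun_sum s fun i _ => hF i) ht
    _ ≤ _ := add_le_add_right ih _

lemma rpow_rpow_inv'' {t : ℝ} (ht : 0 < t) (x : ℝ≥0∞) : (x ^ t) ^ (1/t) = x := by
  rw [← ENNReal.rpow_mul, mul_one_div, div_self ht.ne', ENNReal.rpow_one]

lemma mnorm_tsum_le [Countable ι] {p : ℝ≥0∞} (hp : 1 ≤ p) (F : ι → α → ℝ≥0∞)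
    (hF : ∀ i, AEMeasurable (F i) μ) :
    mnorm p μ (fun x => ∑' i, F i x) ≤ ∑' i, mnorm p μ (F i) := by
  unfold mnorm
  split
  · have h : ∀ᵐ x ∂μ, ∀ i, F i x ≤ essSup (F i) μ := ae_all_iff.mpr fun i => ae_le_essSup (F i)
    refine essSup_le_of_ae_le _ ?_
    filter_upwards [h] with x hx
    exact ENNReal.tsum_le_tsum hx
  · next hne =>
    classical
    have ht : 1 ≤ p.toReal := one_le_toReal' hp hne
    have ht0 : 0 < p.toReal := by linarith
    have hpt : ∀ x, (∑' i, F i x) ^ p.toReal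
        = ⨆ s : Finset ι, (∑ i ∈ s, F i x) ^ p.toReal := fun x => by
      rw [ENNReal.tsum_eq_iSup_sum, iSup_rpow _ ht0]
    simp_rw [hpt]
    rw [lintegral_iSup_directed ?hf ?hdir]
    case hf => exact fun s => (Finset.aemeasurable_fun_sum s fun i _ => hF i).pow_const _
    case hdir =>
      intro s t
      exact ⟨s ∪ t, fun x => ENNReal.rpow_le_rpow
          (Finset.sum_le_sum_of_subset (by simp)) ht0.le,
        fun x => ENNReal.rpow_le_rpow (Finset.sum_le_sum_of_subset (by simp)) ht0.le⟩
    have key : ∀ s : Finset ι,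
        ∫⁻ x, (∑ i ∈ s, F i x) ^ p.toReal ∂μ
          ≤ (∑' i, (∫⁻ x, F i x ^ p.toReal ∂μ) ^ (1/p.toReal)) ^ p.toReal := by
      intro s
      have h2 : (∫⁻ x, (∑ i ∈ s, F i x) ^ p.toReal ∂μ) ^ (1/p.toReal)
          ≤ ∑' i, (∫⁻ x, F i x ^ p.toReal ∂μ) ^ (1/p.toReal) :=
        (lintegral_Lp_sum_le ht F hF s).trans (ENNReal.sum_le_tsum s)
      calc ∫⁻ x, (∑ i ∈ s, F i x) ^ p.toReal ∂μ
          = ((∫⁻ x, (∑ i ∈ s, F i x) ^ p.toReal ∂μ) ^ (1/p.toReal)) ^ p.toReal := by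
            rw [← ENNReal.rpow_mul, one_div, inv_mul_cancel₀ ht0.ne', ENNReal.rpow_one]
      _ ≤ _ := ENNReal.rpow_le_rpow h2 ht0.le
    calc (⨆ s : Finset ι, ∫⁻ x, (∑ i ∈ s, F i x) ^ p.toReal ∂μ) ^ (1/p.toReal)
        ≤ ((∑' i, (∫⁻ x, F i x ^ p.toReal ∂μ) ^ (1/p.toReal)) ^ p.toReal) ^ (1/p.toReal) :=
          ENNReal.rpow_le_rpow (iSup_le key) (by positivity)
    _ = _ := rpow_rpow_inv'' ht0 _

lemma dnorm_eq_mnorm_count [MeasurableSpace ι] [MeasurableSingletonClass ι] [Countable ι]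
    (p : ℝ≥0∞) (c : ι → ℝ≥0∞) : dnorm p c = mnorm p Measure.count c := by
  unfold dnorm mnorm
  split
  · exact (essSup_count c).symm
  · rw [lintegral_count]

lemma dnorm_tsum_le {κ : Type*} [MeasurableSpace κ] [MeasurableSingletonClass κ] [Countable κ]
    [Countable ι] {p : ℝ≥0∞} (hp : 1 ≤ p) (F : ι → κ → ℝ≥0∞) :
    dnorm p (fun k => ∑' i, F i k) ≤ ∑' i, dnorm p (F i) := by
  simp_rw [dnorm_eq_mnorm_count]
  exact mnorm_tsum_le hp F fun i => (measurable_of_countable (F i)).aemeasurable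

lemma dnorm_comp_equiv {p : ℝ≥0∞} (e : ι ≃ ι) (c : ι → ℝ≥0∞) :
    dnorm p (fun i => c (e i)) = dnorm p c := by
  unfold dnorm
  split
  · exact e.surjective.iSup_comp c
  · rw [e.tsum_eq (fun i => c i ^ p.toReal)]

lemma tsum_lintegral_le [Countable ι] (ν : Measure α) (g : ι → α → ℝ≥0∞) :
    ∑' i, ∫⁻ x, g i x ∂ν ≤ ∫⁻ x, ∑' i, g i x ∂ν := by
  classical
  rw [ENNReal.tsum_eq_iSup_sum]
  refine iSup_le fun s => ?_
  have h : ∀ s : Finset ι, ∑ i ∈ s, ∫⁻ x, g i x ∂ν ≤ ∫⁻ x, ∑ i ∈ s, g i x ∂ν := by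
    intro s
    induction s using Finset.induction with
    | empty => simp
    | insert a t hi ih =>
      simp only [Finset.sum_insert hi]
      calc ∫⁻ x, g a x ∂ν + ∑ i ∈ t, ∫⁻ x, g i x ∂ν
          ≤ ∫⁻ x, g a x ∂ν + ∫⁻ x, ∑ i ∈ t, g i x ∂ν := add_le_add_right ih _
      _ ≤ _ := le_lintegral_add _ _
  exact (h s).trans (lintegral_mono fun x => ENNReal.sum_le_tsum s)

lemma periodize {μ ν : Measure α} [Countable ι]
    (e : ι → α ≃ᵐ α) (s : ι → Set α) (hs : ∀ i, MeasurableSet (s i))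
    (hd : Pairwise (Function.onFun Disjoint s)) (hcov : (⋃ i, s i) = Set.univ)
    (hmap : ∀ i, Measure.map (e i) ν = μ.restrict (s i))
    {p : ℝ≥0∞} (hp : 1 ≤ p) (Φ : α → ℝ≥0∞) :
    mnorm p μ Φ ≤ mnorm p ν (fun y => dnorm p (fun i => Φ (e i y))) := by
  have hsum : μ = Measure.sum (fun i => μ.restrict (s i)) := by
    conv_lhs => rw [← Measure.restrict_univ (μ := μ), ← hcov]
    exact Measure.restrict_iUnion hd hs
  unfold mnorm dnorm
  split
  · set C := essSup (fun y => ⨆ i, Φ (e i y)) ν with hC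
    rw [hsum]
    refine essSup_le_of_ae_le _ ?_
    show ∀ᵐ x ∂(Measure.sum fun i => μ.restrict (s i)), Φ x ≤ C
    rw [Measure.ae_sum_iff]
    intro i
    rw [← hmap i, ← MeasurableEquiv.map_ae]
    rw [Filter.eventually_map]
    filter_upwards [ae_le_essSup (fun y => ⨆ i, Φ (e i y))] with y hy
    exact le_trans (le_iSup (fun i => Φ (e i y)) i) hy
  · next hne =>
    have ht : 1 ≤ p.toReal := one_le_toReal' hp hne
    have ht0 : 0 < p.toReal := by linarith
    have step1 : ∫⁻ x, Φ x ^ p.toReal ∂μ = ∑' i, ∫⁻ y, Φ (e i y) ^ p.toReal ∂ν := by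
      rw [hsum, lintegral_sum_measure]
      congr 1
      ext i
      rw [← hmap i, lintegral_map_equiv]
    have step2 : ∑' i, ∫⁻ y, Φ (e i y) ^ p.toReal ∂ν
        ≤ ∫⁻ y, ∑' i, Φ (e i y) ^ p.toReal ∂ν := tsum_lintegral_le ν _
    have step3 : ∀ y : α, ∑' i, Φ (e i y) ^ p.toReal
        = ((∑' i, Φ (e i y) ^ p.toReal) ^ (1/p.toReal)) ^ p.toReal := fun y => by
      rw [← ENNReal.rpow_mul, one_div, inv_mul_cancel₀ ht0.ne', ENNReal.rpow_one]
    refine ENNReal.rpow_le_rpow ?_ (by positivity)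
    rw [step1]
    refine step2.trans (le_of_eq ?_)
    exact lintegral_congr fun y => step3 y

end Aux

/-! ### Partition instances -/

lemma map_Z_restrict (k : ℤ) :
    Measure.map (MeasurableEquiv.addRight (k:ℝ)) (volume.restrict (Set.Icc (0:ℝ) 1))
      = volume.restrict (Set.Ico (k:ℝ) (k+1)) := by
  have h1 : volume.restrict (Set.Icc (0:ℝ) 1) = volume.restrict (Set.Ico (0:ℝ) 1) :=
    (Measure.restrict_congr_set Ico_ae_eq_Icc).symm
  have h2 : Set.Ico (0:ℝ) 1 = (fun x => x + (k:ℝ)) ⁻¹' Set.Ico (k:ℝ) (k+1) := by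
    ext x
    simp only [Set.mem_Ico, Set.mem_preimage]
    constructor <;> rintro ⟨a, b⟩ <;> constructor <;> linarith
  calc Measure.map (⇑(MeasurableEquiv.addRight (k:ℝ))) (volume.restrict (Set.Icc (0:ℝ) 1))
      = Measure.map (fun x => x + (k:ℝ))
          (volume.restrict ((fun x => x + (k:ℝ)) ⁻¹' Set.Ico (k:ℝ) (k+1))) := by
        rw [MeasurableEquiv.coe_addRight, h1, h2]
  _ = (Measure.map (fun x => x + (k:ℝ)) volume).restrict (Set.Ico (k:ℝ) (k+1)) :=
        (Measure.restrict_map (measurable_add_const _) measurableSet_Ico).symm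
  _ = volume.restrict (Set.Ico (k:ℝ) (k+1)) := by rw [map_add_right_eq_self]

lemma map_Zd_restrict {d : ℕ} (k : Zd d) :
    Measure.map (MeasurableEquiv.addRight (zcast k)) (volume.restrict (cube d))
      = volume.restrict (Set.univ.pi fun i => Set.Ico (k i : ℝ) (k i + 1)) := by
  have h1 : volume.restrict (cube d)
      = volume.restrict (Set.univ.pi fun _ : Fin d => Set.Ico (0:ℝ) 1) := by
    refine (Measure.restrict_congr_set ?_).symm
    show (Set.univ.pi fun i : Fin d => Set.Ico ((0:Rd d) i) ((1:Rd d) i)) =ᵐ[volume] cube d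
    rw [volume_pi]
    exact Measure.univ_pi_Ico_ae_eq_Icc
  have h2 : (Set.univ.pi fun _ : Fin d => Set.Ico (0:ℝ) 1)
      = (fun x : Rd d => x + zcast k) ⁻¹' (Set.univ.pi fun i => Set.Ico (k i : ℝ) (k i + 1)) := by
    ext x
    simp only [Set.mem_pi, Set.mem_univ, forall_true_left, Set.mem_Ico, Set.mem_preimage]
    refine forall_congr' fun i => ?_
    have hxi : (x + zcast k) i = x i + (k i : ℝ) := rfl
    rw [hxi]
    constructor <;> rintro ⟨a, b⟩ <;> constructor <;> linarith
  calc Measure.map (⇑(MeasurableEquiv.addRight (zcast k))) (volume.restrict (cube d))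
      = Measure.map (fun x : Rd d => x + zcast k)
          (volume.restrict ((fun x : Rd d => x + zcast k) ⁻¹'
            (Set.univ.pi fun i => Set.Ico (k i : ℝ) (k i + 1)))) := by
        rw [MeasurableEquiv.coe_addRight, h1, h2]
  _ = (Measure.map (fun x : Rd d => x + zcast k) volume).restrict
        (Set.univ.pi fun i => Set.Ico (k i : ℝ) (k i + 1)) :=
        (Measure.restrict_map (measurable_add_const _)
          (MeasurableSet.univ_pi fun i => measurableSet_Ico)).symm
  _ = _ := by rw [map_add_right_eq_self]

lemma periodize_R {p : ℝ≥0∞} (hp : 1 ≤ p) (Φ : ℝ → ℝ≥0∞) :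
    mnorm p volume Φ ≤ mnorm p (volume.restrict (Set.Icc (0:ℝ) 1))
      (fun y => dnorm p (fun k : ℤ => Φ (y + (k:ℝ)))) := by
  have h := periodize (μ := volume) (ν := volume.restrict (Set.Icc (0:ℝ) 1))
    (fun k : ℤ => MeasurableEquiv.addRight (k:ℝ))
    (fun k : ℤ => Set.Ico (k:ℝ) (k+1))
    (fun k => measurableSet_Ico)
    ?_ ?_ (fun k => map_Z_restrict k) hp Φ
  · simpa [MeasurableEquiv.coe_addRight] using h
  · intro k l hkl
    refine Set.disjoint_left.mpr fun x hk hl => hkl ?_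
    have h1 : ⌊x⌋ = k := Int.floor_eq_iff.mpr ⟨hk.1, by exact_mod_cast hk.2⟩
    have h2 : ⌊x⌋ = l := Int.floor_eq_iff.mpr ⟨hl.1, by exact_mod_cast hl.2⟩
    rw [← h1, h2]
  · ext x
    simp only [Set.mem_iUnion, Set.mem_univ, iff_true, Set.mem_Ico]
    exact ⟨⌊x⌋, Int.floor_le x, by exact_mod_cast Int.lt_floor_add_one x⟩

lemma periodize_Rd {d : ℕ} {p : ℝ≥0∞} (hp : 1 ≤ p) (Φ : Rd d → ℝ≥0∞) :
    mnorm p volume Φ ≤ mnorm p (volume.restrict (cube d))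
      (fun y => dnorm p (fun k : Zd d => Φ (y + zcast k))) := by
  have h := periodize (μ := volume) (ν := volume.restrict (cube d))
    (fun k : Zd d => MeasurableEquiv.addRight (zcast k))
    (fun k : Zd d => Set.univ.pi fun i => Set.Ico (k i : ℝ) (k i + 1))
    (fun k => MeasurableSet.univ_pi fun i => measurableSet_Ico)
    ?_ ?_ (fun k => map_Zd_restrict k) hp Φ
  · simpa [MeasurableEquiv.coe_addRight] using h
  · intro k l hkl
    refine Set.disjoint_left.mpr fun x hk hl => hkl ?_
    funext i
    have hki := hk i (Set.mem_univ i)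
    have hli := hl i (Set.mem_univ i)
    have h1 : ⌊x i⌋ = k i := Int.floor_eq_iff.mpr ⟨hki.1, by exact_mod_cast hki.2⟩
    have h2 : ⌊x i⌋ = l i := Int.floor_eq_iff.mpr ⟨hli.1, by exact_mod_cast hli.2⟩
    rw [← h1, h2]
  · ext x
    simp only [Set.mem_iUnion, Set.mem_univ, iff_true, Set.mem_pi, Set.mem_Ico]
    exact ⟨fun i => ⌊x i⌋, fun i _ =>
      ⟨Int.floor_le (x i), by exact_mod_cast Int.lt_floor_add_one (x i)⟩⟩

/-- Lemma 2.1: `‖f ∗' D‖_{L^{p,q}} ≤ ‖D‖_{ℓ^{p,q}} ‖f‖_{𝓛^{p,q}}`. -/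
theorem stmt0 {d : ℕ} (p q : ℝ≥0∞) (hp : 1 ≤ p) (hq : 1 ≤ q)
    (f : ℝ × Rd d → ℂ) (hf : Measurable f)
    (D : ℤ × Zd d → ℂ) (hD : lpq p q D ≠ ∞) (hfa : amal p q f ≠ ∞) :
    mixedLpq p q (semiConv f D) ≤ lpq p q D * amal p q f := by
  classical
  set af : ℝ × Rd d → ℝ≥0∞ := fun x => (‖f x‖₊ : ℝ≥0∞) with haf
  set aD : ℤ × Zd d → ℝ≥0∞ := fun j => (‖D j‖₊ : ℝ≥0∞) with haD
  set G : ℝ × Rd d → ℝ≥0∞ :=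
    fun x => ∑' j : ℤ × Zd d, aD j * af (x.1 - (j.1:ℝ), x.2 - zcast j.2) with hG
  have haf_meas : Measurable af := hf.nnnorm.coe_nnreal_ennreal
  -- Step 0 : pointwise bound
  have step0 : ∀ x : ℝ × Rd d, (‖semiConv f D x‖₊ : ℝ≥0∞) ≤ G x := by
    intro x
    have hterm : ∀ j : ℤ × Zd d,
        aD j * af (x.1 - (j.1:ℝ), x.2 - zcast j.2)
          = ((‖D j * f (x.1 - (j.1:ℝ), x.2 - zcast j.2)‖₊ : NNReal) : ℝ≥0∞) := by
      intro j
      rw [nnnorm_mul, ENNReal.coe_mul]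
    by_cases hS : Summable (fun j : ℤ × Zd d => ‖D j * f (x.1 - (j.1:ℝ), x.2 - zcast j.2)‖₊)
    · have h1 : ‖∑' j : ℤ × Zd d, D j * f (x.1 - (j.1:ℝ), x.2 - zcast j.2)‖₊
          ≤ ∑' j : ℤ × Zd d, ‖D j * f (x.1 - (j.1:ℝ), x.2 - zcast j.2)‖₊ := nnnorm_tsum_le hS
      calc (‖semiConv f D x‖₊ : ℝ≥0∞)
          ≤ ((∑' j : ℤ × Zd d, ‖D j * f (x.1 - (j.1:ℝ), x.2 - zcast j.2)‖₊ : NNReal) : ℝ≥0∞) := by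
            exact_mod_cast h1
      _ = ∑' j : ℤ × Zd d, ((‖D j * f (x.1 - (j.1:ℝ), x.2 - zcast j.2)‖₊ : NNReal) : ℝ≥0∞) :=
            ENNReal.coe_tsum hS
      _ = G x := by rw [hG]; exact tsum_congr fun j => (hterm j).symm
    · have h2 : G x = ∞ := by
        rw [hG]
        simp only [hterm]
        by_contra h
        exact hS (ENNReal.tsum_coe_ne_top_iff_summable.mp h)
      rw [h2]; exact le_top
  -- row norms of D
  set A1 : ℤ → ℝ≥0∞ := fun j₁ => dnorm q (fun j₂ : Zd d => aD (j₁, j₂)) with hA1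
  have hA1lpq : dnorm p A1 = lpq p q D := rfl
  have hA1fin : ∀ j₁, A1 j₁ ≠ ∞ :=
    fun j₁ => ne_top_of_le_ne_top hD (by rw [← hA1lpq]; exact le_dnorm hp A1 j₁)
  -- the function β
  set β : ℝ → ℤ → ℝ≥0∞ := fun y₁ m₁ => mnorm q (volume.restrict (cube d))
    (fun y₂ => ∑' m₂ : Zd d, af (y₁ + (m₁:ℝ), y₂ + zcast m₂)) with hβ
  have hamal : mnorm p (volume.restrict (Set.Icc (0:ℝ) 1))
      (fun y₁ => ∑' m₁ : ℤ, β y₁ m₁) = amal p q f := rfl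
  -- reindexing of G
  have keyG : ∀ (y₁ : ℝ) (y₂ : Rd d) (k₁ : ℤ) (k₂ : Zd d),
      G (y₁ + (k₁:ℝ), y₂ + zcast k₂)
        = ∑' m₁ : ℤ, ∑' m₂ : Zd d, aD (k₁ - m₁, k₂ - m₂) * af (y₁ + (m₁:ℝ), y₂ + zcast m₂) := by
    intro y₁ y₂ k₁ k₂
    have hGdef : G (y₁ + (k₁:ℝ), y₂ + zcast k₂)
        = ∑' j : ℤ × Zd d, aD j * af ((y₁ + (k₁:ℝ)) - (j.1:ℝ), (y₂ + zcast k₂) - zcast j.2) := rfl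
    rw [hGdef]
    rw [← (Equiv.subLeft ((k₁, k₂) : ℤ × Zd d)).tsum_eq
      (fun j : ℤ × Zd d => aD j * af ((y₁ + (k₁:ℝ)) - (j.1:ℝ), (y₂ + zcast k₂) - zcast j.2))]
    rw [← ENNReal.tsum_prod]
    refine tsum_congr fun m => ?_
    have hm1 : ((Equiv.subLeft ((k₁, k₂) : ℤ × Zd d)) m).1 = k₁ - m.1 := rfl
    have hm2 : ((Equiv.subLeft ((k₁, k₂) : ℤ × Zd d)) m).2 = k₂ - m.2 := rfl
    rw [hm1, hm2]
    congr 1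
    have e1 : (y₁ + (k₁:ℝ)) - ((k₁ - m.1 : ℤ) : ℝ) = y₁ + (m.1:ℝ) := by push_cast; ring
    have e2 : (y₂ + zcast k₂) - zcast (k₂ - m.2) = y₂ + zcast m.2 := by
      funext i
      show (y₂ i + (k₂ i : ℝ)) - ((k₂ i - m.2 i : ℤ) : ℝ) = y₂ i + (m.2 i : ℝ)
      push_cast; ring
    rw [e1, e2]
  -- inner estimate in k₂
  have inner1 : ∀ (y₁ : ℝ) (y₂ : Rd d) (k₁ : ℤ),
      dnorm q (fun k₂ : Zd d => G (y₁ + (k₁:ℝ), y₂ + zcast k₂))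
        ≤ ∑' m₁ : ℤ, A1 (k₁ - m₁) * (∑' m₂ : Zd d, af (y₁ + (m₁:ℝ), y₂ + zcast m₂)) := by
    intro y₁ y₂ k₁
    have h0 : (fun k₂ : Zd d => G (y₁ + (k₁:ℝ), y₂ + zcast k₂))
        = fun k₂ : Zd d => ∑' m₁ : ℤ, ∑' m₂ : Zd d,
            aD (k₁ - m₁, k₂ - m₂) * af (y₁ + (m₁:ℝ), y₂ + zcast m₂) := by
      funext k₂; exact keyG y₁ y₂ k₁ k₂
    rw [h0]
    refine le_trans (dnorm_tsum_le hq _) (ENNReal.tsum_le_tsum fun m₁ => ?_)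
    refine le_trans (dnorm_tsum_le hq _) (le_of_eq ?_)
    have h1 : ∀ m₂ : Zd d, dnorm q (fun k₂ : Zd d =>
        aD (k₁ - m₁, k₂ - m₂) * af (y₁ + (m₁:ℝ), y₂ + zcast m₂))
          = af (y₁ + (m₁:ℝ), y₂ + zcast m₂) * A1 (k₁ - m₁) := by
      intro m₂
      have hcomm : (fun k₂ : Zd d => aD (k₁ - m₁, k₂ - m₂) * af (y₁ + (m₁:ℝ), y₂ + zcast m₂))
          = fun k₂ : Zd d => af (y₁ + (m₁:ℝ), y₂ + zcast m₂) * aD (k₁ - m₁, k₂ - m₂) := by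
        funext k₂; ring
      rw [hcomm, dnorm_const_mul hq]
      congr 1
      have := dnorm_comp_equiv (p := q) (Equiv.subRight m₂) (fun j₂ : Zd d => aD (k₁ - m₁, j₂))
      simpa [Equiv.subRight] using this
    calc (∑' m₂ : Zd d, dnorm q fun k₂ : Zd d =>
            aD (k₁ - m₁, k₂ - m₂) * af (y₁ + (m₁:ℝ), y₂ + zcast m₂))
        = ∑' m₂ : Zd d, af (y₁ + (m₁:ℝ), y₂ + zcast m₂) * A1 (k₁ - m₁) := tsum_congr h1
    _ = (∑' m₂ : Zd d, af (y₁ + (m₁:ℝ), y₂ + zcast m₂)) * A1 (k₁ - m₁) := ENNReal.tsum_mul_right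
    _ = A1 (k₁ - m₁) * (∑' m₂ : Zd d, af (y₁ + (m₁:ℝ), y₂ + zcast m₂)) := mul_comm _ _
  -- estimate after the q-norm in y₂
  have inner2 : ∀ (y₁ : ℝ) (k₁ : ℤ),
      mnorm q (volume.restrict (cube d))
        (fun y₂ => dnorm q (fun k₂ : Zd d => G (y₁ + (k₁:ℝ), y₂ + zcast k₂)))
        ≤ ∑' m₁ : ℤ, A1 (k₁ - m₁) * β y₁ m₁ := by
    intro y₁ k₁
    refine le_trans (mnorm_mono fun y₂ => inner1 y₁ y₂ k₁) ?_
    refine le_trans (mnorm_tsum_le hq _ fun m₁ => ?_) (ENNReal.tsum_le_tsum fun m₁ => ?_)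
    · refine Measurable.aemeasurable ?_
      refine (Measurable.ennreal_tsum fun m₂ => ?_).const_mul _
      exact haf_meas.comp (measurable_const.prodMk (measurable_add_const _))
    · rw [mnorm_const_mul hq (hA1fin _)]
  -- estimate after the p-seq-norm in k₁
  have inner3 : ∀ y₁ : ℝ,
      dnorm p (fun k₁ : ℤ => mnorm q (volume.restrict (cube d))
        (fun y₂ => dnorm q (fun k₂ : Zd d => G (y₁ + (k₁:ℝ), y₂ + zcast k₂))))
        ≤ lpq p q D * ∑' m₁ : ℤ, β y₁ m₁ := by
    intro y₁
    refine le_trans (dnorm_mono fun k₁ => inner2 y₁ k₁) ?_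
    refine le_trans (dnorm_tsum_le hp _) (le_of_eq ?_)
    have h1 : ∀ m₁ : ℤ, dnorm p (fun k₁ : ℤ => A1 (k₁ - m₁) * β y₁ m₁)
        = β y₁ m₁ * lpq p q D := by
      intro m₁
      have hcomm : (fun k₁ : ℤ => A1 (k₁ - m₁) * β y₁ m₁)
          = fun k₁ : ℤ => β y₁ m₁ * A1 (k₁ - m₁) := by funext k₁; ring
      rw [hcomm, dnorm_const_mul hp]
      congr 1
      rw [← hA1lpq]
      have := dnorm_comp_equiv (p := p) (Equiv.subRight m₁) A1
      simpa [Equiv.subRight] using this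
    calc (∑' m₁ : ℤ, dnorm p fun k₁ : ℤ => A1 (k₁ - m₁) * β y₁ m₁)
        = ∑' m₁ : ℤ, β y₁ m₁ * lpq p q D := tsum_congr h1
    _ = (∑' m₁ : ℤ, β y₁ m₁) * lpq p q D := ENNReal.tsum_mul_right
    _ = lpq p q D * ∑' m₁ : ℤ, β y₁ m₁ := mul_comm _ _
  -- assemble
  have chain1 : mixedLpq p q (semiConv f D)
      ≤ mnorm p volume (fun x₁ => mnorm q volume (fun x₂ => G (x₁, x₂))) := by
    unfold mixedLpq
    exact mnorm_mono fun x₁ => mnorm_mono fun x₂ => step0 (x₁, x₂)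
  set Φ : ℝ → ℝ≥0∞ := fun x₁ => mnorm q volume (fun x₂ => G (x₁, x₂)) with hΦ
  have chainA : ∀ x₁ : ℝ, Φ x₁ ≤ mnorm q (volume.restrict (cube d))
      (fun y₂ => dnorm q (fun k₂ : Zd d => G (x₁, y₂ + zcast k₂))) :=
    fun x₁ => periodize_Rd hq (fun x₂ => G (x₁, x₂))
  have chainB : mnorm p volume Φ ≤ mnorm p (volume.restrict (Set.Icc (0:ℝ) 1))
      (fun y₁ => dnorm p (fun k₁ : ℤ => Φ (y₁ + (k₁:ℝ)))) := periodize_R hp Φ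
  calc mixedLpq p q (semiConv f D)
      ≤ mnorm p volume Φ := chain1
  _ ≤ mnorm p (volume.restrict (Set.Icc (0:ℝ) 1))
        (fun y₁ => dnorm p (fun k₁ : ℤ => Φ (y₁ + (k₁:ℝ)))) := chainB
  _ ≤ mnorm p (volume.restrict (Set.Icc (0:ℝ) 1))
        (fun y₁ => lpq p q D * ∑' m₁ : ℤ, β y₁ m₁) := by
      refine mnorm_mono fun y₁ => ?_
      refine le_trans (dnorm_mono fun k₁ => chainA (y₁ + (k₁:ℝ))) (inner3 y₁)
  _ = lpq p q D * amal p q f := by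
      rw [mnorm_const_mul hp hD, hamal]
end
end

section
/- Let M(ξ,ξ̃) be a continuous, 2π-periodic (in each variable), positive semi-definite Hermitian r×r matrix-valued function on R × R^d. Then the following are equivalent: (a) rank M(ξ,ξ̃) is constant on R × R^d; (b) there exists a constant C > 0 independent of (ξ,ξ̃) such that C⁻¹ M(ξ,ξ̃) ≤ M(ξ,ξ̃)² ≤ C M(ξ,ξ̃) (as Hermitian matrices) for all (ξ,ξ̃) ∈ [−π,π] × [−π,π]^d. -/
open MeasureTheory Filter
open scoped ComplexOrder

noncomputable section

/-- the Loewner order on Hermitian matrices: `A ≤ B` iff `B - A` is positive semidefinite -/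
def matLE {r : ℕ} (A B : Matrix (Fin r) (Fin r) ℂ) : Prop := (B - A).PosSemidef

namespace Aux
open Matrix

variable {r : ℕ} {A : Matrix (Fin r) (Fin r) ℂ}

def gfun {r : ℕ} (A : Matrix (Fin r) (Fin r) ℂ) (t : ℝ) : ℝ :=
  (Matrix.det (1 + (t : ℂ) • A)).re

lemma det_one_add_smul (hA : A.IsHermitian) (t : ℝ) :
    Matrix.det (1 + (t : ℂ) • A) = ∏ i, ((1 + t * hA.eigenvalues i : ℝ) : ℂ) := by
  set U := (hA.eigenvectorUnitary : Matrix (Fin r) (Fin r) ℂ) with hU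
  have h2 : U * star U = 1 := Matrix.mem_unitaryGroup_iff.mp hA.eigenvectorUnitary.2
  have h1 : star U * U = 1 := Matrix.mem_unitaryGroup_iff'.mp hA.eigenvectorUnitary.2
  have key : 1 + (t : ℂ) • A =
      U * Matrix.diagonal (fun i => ((1 + t * hA.eigenvalues i : ℝ) : ℂ)) * star U := by
    have : Matrix.diagonal (fun i => ((1 + t * hA.eigenvalues i : ℝ) : ℂ))
        = 1 + (t : ℂ) • Matrix.diagonal (RCLike.ofReal ∘ hA.eigenvalues : Fin r → ℂ) := by
      ext i j
      rcases eq_or_ne i j with h | h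
      · subst h; simp [Matrix.diagonal_apply_eq]; try (push_cast; ring)
      · simp [Matrix.diagonal_apply_ne _ h, Matrix.one_apply_ne h]
    rw [this, Matrix.mul_add, Matrix.add_mul, Matrix.mul_one, h2, Matrix.mul_smul,
      Matrix.smul_mul]
    conv_lhs => rw [hA.spectral_theorem, Unitary.conjStarAlgAut_apply]
  rw [key, Matrix.det_mul, Matrix.det_mul, mul_comm, ← mul_assoc, ← Matrix.det_mul, h1]
  simp [Matrix.det_diagonal]

lemma gfun_eq (hA : A.IsHermitian) (t : ℝ) :
    gfun A t = ∏ i, (1 + t * hA.eigenvalues i) := by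
  rw [gfun, det_one_add_smul hA t]
  norm_cast

lemma continuous_gfun {X : Type*} [TopologicalSpace X] {M : X → Matrix (Fin r) (Fin r) ℂ}
    (hM : Continuous M) (t : ℝ) : Continuous fun x => gfun (M x) t := by
  unfold gfun
  exact Complex.continuous_re.comp (Continuous.matrix_det (continuous_const.add (hM.const_smul (t:ℂ)) :
    Continuous fun x => 1 + (t:ℂ) • M x))

lemma continuous_traceRe {X : Type*} [TopologicalSpace X] {M : X → Matrix (Fin r) (Fin r) ℂ}
    (hM : Continuous M) : Continuous fun x => (Matrix.trace (M x)).re := by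
  exact Complex.continuous_re.comp (Continuous.matrix_trace hM)

/-- eigenvalue at most (real part of) trace, for PSD matrices -/

lemma eig_le_trace (hA : A.PosSemidef) (i : Fin r) :
    hA.1.eigenvalues i ≤ (Matrix.trace A).re := by
  have ht : Matrix.trace A = ∑ j, (hA.1.eigenvalues j : ℂ) := by
    nth_rewrite 1 [hA.1.spectral_theorem]
    rw [Unitary.conjStarAlgAut_apply]
    rw [Matrix.trace_mul_cycle]
    rw [Matrix.mem_unitaryGroup_iff'.mp hA.1.eigenvectorUnitary.2, Matrix.one_mul,
      Matrix.trace_diagonal]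
    rfl
  rw [ht]
  have : (∑ j, (hA.1.eigenvalues j : ℂ)).re = ∑ j, hA.1.eigenvalues j := by
    norm_cast
  rw [this]
  exact Finset.single_le_sum (fun j _ => hA.eigenvalues_nonneg j) (Finset.mem_univ i)

lemma sq_sub_smul (hA : A.IsHermitian) (c : ℝ) :
    A * A - (c : ℝ) • A =
      (hA.eigenvectorUnitary : Matrix (Fin r) (Fin r) ℂ) *
        Matrix.diagonal (fun i => ((hA.eigenvalues i ^ 2 - c * hA.eigenvalues i : ℝ) : ℂ)) *
        star (hA.eigenvectorUnitary : Matrix (Fin r) (Fin r) ℂ) := by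
  set U := (hA.eigenvectorUnitary : Matrix (Fin r) (Fin r) ℂ) with hU
  have h1 : star U * U = 1 := Matrix.mem_unitaryGroup_iff'.mp hA.eigenvectorUnitary.2
  have hsp := hA.spectral_theorem
  rw [Unitary.conjStarAlgAut_apply, ← hU] at hsp
  set D := Matrix.diagonal (RCLike.ofReal ∘ hA.eigenvalues : Fin r → ℂ) with hD
  have hAA : A * A = U * (D * D) * star U := by
    conv_lhs => rw [hsp]
    rw [show U * D * star U * (U * D * star U)
        = U * D * (star U * U) * (D * star U) by
      simp only [Matrix.mul_assoc]]
    rw [h1, Matrix.mul_one]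
    simp only [Matrix.mul_assoc]
  have hcA : (c : ℝ) • A = U * ((c : ℂ) • D) * star U := by
    conv_lhs => rw [hsp]
    rw [Matrix.mul_smul, Matrix.smul_mul]
    ext i j
    simp [Complex.real_smul]
  rw [hAA, hcA, ← Matrix.sub_mul, ← Matrix.mul_sub]
  congr 2
  ext i j
  rcases eq_or_ne i j with h | h
  · subst h
    simp [hD, Matrix.diagonal_apply_eq]
    push_cast
    ring
  · simp [hD, Matrix.diagonal_apply_ne _ h]

lemma smul_sub_sq (hA : A.IsHermitian) (c : ℝ) :
    (c : ℝ) • A - A * A =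
      (hA.eigenvectorUnitary : Matrix (Fin r) (Fin r) ℂ) *
        Matrix.diagonal (fun i => ((c * hA.eigenvalues i - hA.eigenvalues i ^ 2 : ℝ) : ℂ)) *
        star (hA.eigenvectorUnitary : Matrix (Fin r) (Fin r) ℂ) := by
  rw [show (c : ℝ) • A - A * A = -(A * A - (c : ℝ) • A) from (neg_sub _ _).symm,
    sq_sub_smul hA c,
    show ∀ X Y Z : Matrix (Fin r) (Fin r) ℂ, -(X * Y * Z) = X * (-Y) * Z from fun X Y Z => by
      rw [← Matrix.neg_mul, ← Matrix.mul_neg]]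
  congr 2
  ext i j
  rcases eq_or_ne i j with h | h
  · subst h; simp [Matrix.diagonal_apply_eq]; try (push_cast; ring)
  · simp [Matrix.diagonal_apply_ne _ h]

lemma diag_psd_of_conj {U : Matrix.unitaryGroup (Fin r) ℂ} {f : Fin r → ℂ}
    (h : ((U : Matrix (Fin r) (Fin r) ℂ) * Matrix.diagonal f *
      star (U : Matrix (Fin r) (Fin r) ℂ)).PosSemidef) : ∀ i, 0 ≤ f i := by
  set V := (U : Matrix (Fin r) (Fin r) ℂ) with hV
  have h1 : star V * V = 1 := Matrix.mem_unitaryGroup_iff'.mp U.2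
  have h2 := h.conjTranspose_mul_mul_same V
  have heq : Vᴴ * (V * Matrix.diagonal f * star V) * V = Matrix.diagonal f := by
    simp only [← Matrix.star_eq_conjTranspose, Matrix.mul_assoc]
    rw [h1, Matrix.mul_one, ← Matrix.mul_assoc, h1, Matrix.one_mul]
  rw [heq] at h2
  exact Matrix.posSemidef_diagonal_iff.mp h2

lemma matLE_smul_sq (hA : A.IsHermitian) {c : ℝ} :
    matLE ((c : ℝ) • A) (A * A) ↔ ∀ i, c * hA.eigenvalues i ≤ hA.eigenvalues i ^ 2 := by
  constructor
  · intro h i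
    unfold matLE at h
    rw [sq_sub_smul hA c] at h
    have := diag_psd_of_conj (U := hA.eigenvectorUnitary) h i
    rw [Complex.zero_le_real] at this
    linarith
  · intro h
    unfold matLE
    rw [sq_sub_smul hA c]
    exact Matrix.PosSemidef.mul_mul_conjTranspose_same
      (Matrix.posSemidef_diagonal_iff.mpr fun i => by
        rw [Complex.zero_le_real]; linarith [h i]) _

lemma matLE_sq_smul (hA : A.IsHermitian) {c : ℝ} :
    matLE (A * A) ((c : ℝ) • A) ↔ ∀ i, hA.eigenvalues i ^ 2 ≤ c * hA.eigenvalues i := by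
  constructor
  · intro h i
    unfold matLE at h
    rw [smul_sub_sq hA c] at h
    have := diag_psd_of_conj (U := hA.eigenvectorUnitary) h i
    rw [Complex.zero_le_real] at this
    linarith
  · intro h
    unfold matLE
    rw [smul_sub_sq hA c]
    exact Matrix.PosSemidef.mul_mul_conjTranspose_same
      (Matrix.posSemidef_diagonal_iff.mpr fun i => by
        rw [Complex.zero_le_real]; linarith [h i]) _

lemma rank_eq_card_filter (hA : A.IsHermitian) :
    A.rank = (Finset.univ.filter (fun i => hA.eigenvalues i ≠ 0)).card := by
  rw [hA.rank_eq_card_non_zero_eigs]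
  exact Fintype.card_subtype _

lemma gfun_eq_prod_filter (hA : A.IsHermitian) (t : ℝ) :
    gfun A t = ∏ i ∈ Finset.univ.filter (fun i => hA.eigenvalues i ≠ 0),
      (1 + t * hA.eigenvalues i) := by
  rw [gfun_eq hA t]
  exact (Finset.prod_subset (Finset.subset_univ _) (fun i _ hi => by
    simp only [Finset.mem_filter, Finset.mem_univ, true_and, not_not] at hi
    rw [hi, mul_zero, add_zero])).symm

/-- lower bound via uniform lower bound on nonzero eigenvalues -/

lemma le_gfun (hA : A.PosSemidef) {t m : ℝ} (ht : 0 ≤ t) (hm : 0 ≤ m)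
    (h : ∀ i, hA.1.eigenvalues i ≠ 0 → m ≤ hA.1.eigenvalues i) :
    (1 + t * m) ^ A.rank ≤ gfun A t := by
  rw [gfun_eq_prod_filter hA.1 t, rank_eq_card_filter hA.1, ← Finset.prod_const]
  refine Finset.prod_le_prod (fun i _ => by positivity) (fun i hi => ?_)
  simp only [Finset.mem_filter, Finset.mem_univ, true_and] at hi
  have := h i hi
  nlinarith

/-- upper bound via uniform upper bound on eigenvalues -/

lemma gfun_le (hA : A.PosSemidef) {t Mb : ℝ} (ht : 0 ≤ t)
    (h : ∀ i, hA.1.eigenvalues i ≤ Mb) :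
    gfun A t ≤ (1 + t * Mb) ^ A.rank := by
  rw [gfun_eq_prod_filter hA.1 t, rank_eq_card_filter hA.1, ← Finset.prod_const]
  exact Finset.prod_le_prod
    (fun i _ => by nlinarith [hA.eigenvalues_nonneg i, mul_nonneg ht (hA.eigenvalues_nonneg i)])
    (fun i hi => by nlinarith [h i, hA.eigenvalues_nonneg i])

/-- lower bound by `t^rank * pseudodeterminant` -/

lemma prod_le_gfun (hA : A.PosSemidef) {t : ℝ} (ht : 0 ≤ t) :
    t ^ A.rank * ∏ i ∈ Finset.univ.filter (fun i => hA.1.eigenvalues i ≠ 0),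
      hA.1.eigenvalues i ≤ gfun A t := by
  rw [gfun_eq_prod_filter hA.1 t, rank_eq_card_filter hA.1, ← Finset.prod_const,
    ← Finset.prod_mul_distrib]
  exact Finset.prod_le_prod (fun i _ => mul_nonneg ht (hA.eigenvalues_nonneg i))
    (fun i hi => by nlinarith [hA.eigenvalues_nonneg i])

/-- one-eigenvalue splitting upper bound -/

lemma gfun_le_single (hA : A.PosSemidef) {t Mb : ℝ} (ht : 0 ≤ t) (hMb : 0 ≤ Mb)
    (h : ∀ i, hA.1.eigenvalues i ≤ Mb) {j : Fin r} (hj : hA.1.eigenvalues j ≠ 0) :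
    gfun A t ≤ (1 + t * hA.1.eigenvalues j) * (1 + t * Mb) ^ (A.rank - 1) := by
  set s := Finset.univ.filter (fun i => hA.1.eigenvalues i ≠ 0) with hs
  have hjs : j ∈ s := by simp [hs, hj]
  rw [gfun_eq_prod_filter hA.1 t, ← Finset.mul_prod_erase s _ hjs,
    rank_eq_card_filter hA.1, ← hs, ← Finset.card_erase_of_mem hjs, ← Finset.prod_const]
  refine mul_le_mul_of_nonneg_left (Finset.prod_le_prod
    (fun i _ => by nlinarith [hA.eigenvalues_nonneg i, mul_nonneg ht (hA.eigenvalues_nonneg i)])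
    (fun i _ => by nlinarith [h i, hA.eigenvalues_nonneg i]))
    (by nlinarith [hA.eigenvalues_nonneg j, mul_nonneg ht (hA.eigenvalues_nonneg j)])

lemma shift_mem (x : ℝ) : x + 2 * Real.pi * ((-round (x / (2 * Real.pi)) : ℤ) : ℝ)
    ∈ Set.Icc (-Real.pi) Real.pi := by
  have h2pi : (0:ℝ) < 2 * Real.pi := by positivity
  have h := abs_sub_round (x / (2 * Real.pi))
  rw [abs_sub_le_iff] at h
  have hx : x = (x / (2 * Real.pi)) * (2 * Real.pi) := (div_mul_cancel₀ x (ne_of_gt h2pi)).symm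
  push_cast
  constructor
  · nlinarith [h.1, h.2, Real.pi_pos]
  · nlinarith [h.1, h.2, Real.pi_pos]

lemma reduce {d r : ℕ} (M : ℝ × Rd d → Matrix (Fin r) (Fin r) ℂ)
    (hper : ∀ (ξ : ℝ × Rd d) (k₁ : ℤ) (k₂ : Fin d → ℤ),
      M (ξ.1 + 2 * Real.pi * (k₁:ℝ), ξ.2 + (2 * Real.pi) • (fun i => (k₂ i : ℝ))) = M ξ)
    (ξ : ℝ × Rd d) :
    ∃ η ∈ (Set.Icc (-Real.pi) Real.pi ×ˢ
          Set.Icc (fun _ => -Real.pi : Rd d) (fun _ => Real.pi)), M η = M ξ := by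
  refine ⟨(ξ.1 + 2 * Real.pi * ((-round (ξ.1 / (2 * Real.pi)) : ℤ) : ℝ),
    ξ.2 + (2 * Real.pi) • (fun i => ((-round (ξ.2 i / (2 * Real.pi)) : ℤ) : ℝ))), ⟨?_, ?_⟩,
    hper ξ _ _⟩
  · exact shift_mem ξ.1
  · rw [Set.mem_Icc]
    constructor <;> rw [Pi.le_def] <;> intro i <;>
      · have := shift_mem (ξ.2 i)
        rw [Set.mem_Icc] at this
        simp only [Pi.add_apply, Pi.smul_apply, smul_eq_mul]
        push_cast at this ⊢
        first
        | exact this.1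
        | exact this.2

lemma gap {C₁ : ℝ} (hC1 : 1 ≤ C₁) {k r : ℕ} (hk : k ≤ r) :
    (1 + C₁ ^ (2 * r + 1) * C₁) ^ k < (1 + C₁ ^ (2 * r + 1) * C₁⁻¹) ^ (k + 1) := by
  have hC0 : (0:ℝ) < C₁ := lt_of_lt_of_le one_pos hC1
  set t : ℝ := C₁ ^ (2 * r + 1) with htdef
  have htinv : t * C₁⁻¹ = C₁ ^ (2 * r) := by
    rw [htdef, pow_succ, mul_assoc, mul_inv_cancel₀ (ne_of_gt hC0), mul_one]
  set L : ℝ := 1 + t * C₁⁻¹ with hLdef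
  set Uv : ℝ := 1 + t * C₁ with hUdef
  have hL : L = 1 + C₁ ^ (2 * r) := by rw [hLdef, htinv]
  have hLpos : 0 < L := by rw [hL]; positivity
  have hUpos : 0 < Uv := by rw [hUdef]; positivity
  have hUL : Uv ≤ C₁ ^ 2 * L := by
    have h1 : C₁ ^ 2 * L = C₁ ^ 2 + C₁ ^ (2 * r + 2) := by
      rw [hL]; ring
    have h2 : Uv = 1 + C₁ ^ (2 * r + 2) := by
      rw [hUdef, htdef, ← pow_succ]
    rw [h1, h2]
    nlinarith
  calc Uv ^ k ≤ (C₁ ^ 2 * L) ^ k := pow_le_pow_left₀ (le_of_lt hUpos) hUL k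
    _ = C₁ ^ (2 * k) * L ^ k := by rw [mul_pow, ← pow_mul]
    _ ≤ C₁ ^ (2 * r) * L ^ k := by
        exact mul_le_mul_of_nonneg_right
          (pow_le_pow_right₀ hC1 (by omega)) (le_of_lt (pow_pos hLpos k))
    _ < L * L ^ k := by
        apply mul_lt_mul_of_pos_right _ (pow_pos hLpos k)
        rw [hL]; linarith
    _ = L ^ (k + 1) := by rw [pow_succ, mul_comm]

lemma rank_locallyConstant {X : Type*} [TopologicalSpace X]
    {M : X → Matrix (Fin r) (Fin r) ℂ} (hcont : Continuous M)
    (hpsd : ∀ x, (M x).PosSemidef) {C₁ : ℝ} (hC1 : 1 ≤ C₁)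
    (heig : ∀ x i, (hpsd x).1.eigenvalues i = 0 ∨
      (C₁⁻¹ ≤ (hpsd x).1.eigenvalues i ∧ (hpsd x).1.eigenvalues i ≤ C₁)) :
    IsLocallyConstant (fun x => (M x).rank) := by
  have hC0 : (0:ℝ) < C₁ := lt_of_lt_of_le one_pos hC1
  set t : ℝ := C₁ ^ (2 * r + 1) with htdef
  have ht : 0 < t := pow_pos hC0 _
  set L : ℝ := 1 + t * C₁⁻¹ with hLdef
  set Uv : ℝ := 1 + t * C₁ with hUdef
  have hL1 : 1 < L := by
    have : 0 < t * C₁⁻¹ := mul_pos ht (inv_pos.mpr hC0)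
    rw [hLdef]; linarith
  have hU1 : 1 ≤ Uv := by nlinarith
  have hglo : ∀ x, L ^ (M x).rank ≤ gfun (M x) t ∧ gfun (M x) t ≤ Uv ^ (M x).rank := by
    intro x
    constructor
    · exact le_gfun (hpsd x) (le_of_lt ht) (le_of_lt (inv_pos.mpr hC0))
        (fun i hi => ((heig x i).resolve_left hi).1)
    · exact gfun_le (hpsd x) (le_of_lt ht)
        (fun i => (heig x i).elim (fun h => by rw [h]; linarith) (fun h => h.2))
  have hrle : ∀ x, (M x).rank ≤ r := fun x => Matrix.rank_le_width (M x)
  have hgap : ∀ k : ℕ, k ≤ r → Uv ^ k < L ^ (k + 1) := fun k hk => gap hC1 hk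
  rw [IsLocallyConstant.iff_eventually_eq]
  intro x₀
  set g : X → ℝ := fun x => gfun (M x) t with hg
  have hgc : Continuous g := continuous_gfun hcont t
  set k₀ := (M x₀).rank with hk₀
  have hk₀r : k₀ ≤ r := hrle x₀
  -- choose ε
  rcases Nat.eq_zero_or_pos k₀ with h0 | hpos
  · have hε : (0:ℝ) < L - 1 := by linarith
    have hev : ∀ᶠ η in nhds x₀, dist (g η) (g x₀) < L - 1 :=
      (Metric.tendsto_nhds.mp (hgc.tendsto x₀)) _ hε
    filter_upwards [hev] with η hη
    show (M η).rank = k₀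
    by_contra hne
    have h1 : 1 ≤ (M η).rank := by omega
    have h2 : L ≤ g η := by
      calc L = L ^ 1 := (pow_one L).symm
        _ ≤ L ^ (M η).rank := pow_le_pow_right₀ (le_of_lt hL1) h1
        _ ≤ g η := (hglo η).1
    have h3 : g x₀ ≤ 1 := by
      have := (hglo x₀).2
      rw [← hk₀, h0, pow_zero] at this
      exact this
    rw [Real.dist_eq, abs_sub_lt_iff] at hη
    linarith [hη.1]
  · set m := k₀ - 1 with hm
    have hk₀m : k₀ = m + 1 := by omega
    have hgap1 : Uv ^ k₀ < L ^ (k₀ + 1) := hgap k₀ hk₀r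
    have hgap2 : Uv ^ m < L ^ k₀ := by rw [hk₀m]; exact hgap m (by omega)
    set ε := min (L ^ (k₀ + 1) - Uv ^ k₀) (L ^ k₀ - Uv ^ m) with hε
    have hεpos : 0 < ε := lt_min (by linarith) (by linarith)
    have hev : ∀ᶠ η in nhds x₀, dist (g η) (g x₀) < ε :=
      (Metric.tendsto_nhds.mp (hgc.tendsto x₀)) _ hεpos
    filter_upwards [hev] with η hη
    show (M η).rank = k₀
    rw [Real.dist_eq, abs_sub_lt_iff] at hη
    have hLle : (1:ℝ) ≤ L := le_of_lt hL1
    rcases lt_trichotomy ((M η).rank) k₀ with hlt | heq | hgt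
    · exfalso
      have h1 : g η ≤ Uv ^ m := by
        calc g η ≤ Uv ^ (M η).rank := (hglo η).2
          _ ≤ Uv ^ m := pow_le_pow_right₀ hU1 (by omega)
      have h2 : L ^ k₀ ≤ g x₀ := (hglo x₀).1
      have : ε ≤ L ^ k₀ - Uv ^ m := min_le_right _ _
      linarith [hη.2]
    · exact heq
    · exfalso
      have h1 : L ^ (k₀ + 1) ≤ g η := by
        calc L ^ (k₀ + 1) ≤ L ^ (M η).rank := pow_le_pow_right₀ hLle (by omega)
          _ ≤ g η := (hglo η).1
      have h2 : g x₀ ≤ Uv ^ k₀ := (hglo x₀).2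
      have : ε ≤ L ^ (k₀ + 1) - Uv ^ k₀ := min_le_left _ _
      linarith [hη.1]

lemma unif_window {X : Type*} [TopologicalSpace X]
    {M : X → Matrix (Fin r) (Fin r) ℂ} (hcont : Continuous M)
    (hpsd : ∀ x, (M x).PosSemidef)
    (hrk : ∀ x y : X, (M x).rank = (M y).rank)
    {K : Set X} (hK : IsCompact K) (hne : K.Nonempty) :
    ∃ c T : ℝ, 0 < c ∧ ∀ x ∈ K, ∀ i, (hpsd x).1.eigenvalues i ≤ T ∧
      ((hpsd x).1.eigenvalues i ≠ 0 → c ≤ (hpsd x).1.eigenvalues i) := by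
  -- uniform upper bound from trace
  obtain ⟨z, hzK, hz⟩ := hK.exists_isMaxOn hne (continuous_traceRe hcont).continuousOn
  rw [isMaxOn_iff] at hz
  set T : ℝ := max 1 ((Matrix.trace (M z)).re) with hT
  have hT1 : 1 ≤ T := le_max_left _ _
  have hub : ∀ x ∈ K, ∀ i, (hpsd x).1.eigenvalues i ≤ T := fun x hx i =>
    le_trans (eig_le_trace (hpsd x) i) (le_trans (hz x hx) (le_max_right _ _))
  -- local claim
  have claim : ∀ x : X, x ∈ K → ∃ c : ℝ, 0 < c ∧ ∃ V : Set X, V ∈ nhds x ∧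
      ∀ η ∈ V, η ∈ K → ∀ j, (hpsd η).1.eigenvalues j ≠ 0 → c ≤ (hpsd η).1.eigenvalues j := by
    intro x hxK
    set k := (M x).rank with hk
    have hkr : k ≤ r := hk ▸ Matrix.rank_le_width (M x)
    set P₀ : ℝ := ∏ i ∈ Finset.univ.filter (fun i => (hpsd x).1.eigenvalues i ≠ 0),
      (hpsd x).1.eigenvalues i with hP₀
    have hP₀pos : 0 < P₀ := Finset.prod_pos (fun i hi => by
      simp only [Finset.mem_filter, Finset.mem_univ, true_and] at hi
      exact lt_of_le_of_ne ((hpsd x).eigenvalues_nonneg i) (Ne.symm hi))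
    set Q : ℝ := (2 * T) ^ r with hQ
    have hQ1 : 1 ≤ Q := one_le_pow₀ (by linarith)
    set t : ℝ := max 1 ((Q + 2) / P₀) with htdef
    have ht1 : 1 ≤ t := le_max_left _ _
    have ht0 : 0 < t := lt_of_lt_of_le one_pos ht1
    have htP : Q + 2 ≤ t * P₀ := by
      have := le_max_right 1 ((Q + 2) / P₀)
      rw [div_le_iff₀ hP₀pos] at this
      exact this
    set g : X → ℝ := fun y => gfun (M y) t with hg
    have hgx : t ^ k * P₀ ≤ g x := prod_le_gfun (hpsd x) (le_of_lt ht0)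
    refine ⟨1 / (Q * t), by positivity, {η | g x - 1 < g η}, ?_, ?_⟩
    · exact (isOpen_lt continuous_const (continuous_gfun hcont t)).mem_nhds (by
        simp only [Set.mem_setOf_eq]; linarith)
    · intro η hηV hηK j hj
      have hkη : (M η).rank = k := hrk η x
      -- rank at η is at least one
      have hk1 : 1 ≤ k := by
        rw [← hkη, rank_eq_card_filter (hpsd η).1]
        exact Finset.card_pos.mpr ⟨j, by simp [hj]⟩
      set lam := (hpsd η).1.eigenvalues j with hlam
      have hlam0 : 0 ≤ lam := (hpsd η).eigenvalues_nonneg j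
      set tk : ℝ := t ^ (k - 1) with htk
      have htk1 : 1 ≤ tk := one_le_pow₀ ht1
      have htkpos : 0 < tk := lt_of_lt_of_le one_pos htk1
      have e1 : g η ≤ (1 + t * lam) * (1 + t * T) ^ (k - 1) := by
        have := gfun_le_single (hpsd η) (le_of_lt ht0) (by linarith : (0:ℝ) ≤ T)
          (hub η hηK) hj
        rwa [hkη] at this
      have e2 : (1 + t * T) ^ (k - 1) ≤ Q * tk := by
        have h2t : (1 + t * T) ≤ 2 * T * t := by nlinarith
        calc (1 + t * T) ^ (k - 1) ≤ (2 * T * t) ^ (k - 1) :=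
              pow_le_pow_left₀ (by nlinarith) h2t _
          _ = (2 * T) ^ (k - 1) * tk := by rw [mul_pow]
          _ ≤ Q * tk := mul_le_mul_of_nonneg_right
              (pow_le_pow_right₀ (by linarith) (by omega)) (le_of_lt htkpos)
      have e3 : g η ≤ (1 + t * lam) * (Q * tk) :=
        le_trans e1 (mul_le_mul_of_nonneg_left e2 (by nlinarith))
      have e4 : tk * (Q + 1) ≤ t ^ k * P₀ - 1 := by
        have htkk : t ^ k = tk * t := by
          rw [htk, ← pow_succ]; congr 1; omega
        have : tk * (Q + 2) ≤ t ^ k * P₀ := by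
          rw [htkk, mul_assoc]
          exact mul_le_mul_of_nonneg_left htP (le_of_lt htkpos)
        nlinarith
      have e5 : tk * (Q + 1) < g η := by
        have : g x - 1 < g η := hηV
        nlinarith
      -- conclude
      have e6 : (Q + 1) * tk < ((1 + t * lam) * Q) * tk := by nlinarith
      have e7 : Q + 1 < (1 + t * lam) * Q := lt_of_mul_lt_mul_right e6 (le_of_lt htkpos)
      rw [div_le_iff₀ (by positivity)]
      nlinarith
  -- extract finite subcover
  choose! c hc V hV hVal using claim
  obtain ⟨fs, hfs⟩ := hK.elim_nhds_subcover' (fun x hx => V x) (fun x hx => hV x hx)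
  rcases fs.eq_empty_or_nonempty with hemp | hfne
  · exfalso
    obtain ⟨x₀, hx₀⟩ := hne
    have := hfs hx₀
    rw [hemp] at this
    simp at this
  · refine ⟨fs.inf' hfne (fun x => c x), T, ?_, ?_⟩
    · rw [Finset.lt_inf'_iff]
      exact fun x hx => hc x x.2
    · intro x hx i
      refine ⟨hub x hx i, fun hi => ?_⟩
      obtain ⟨y, hy, hxy⟩ := Set.mem_iUnion₂.mp (hfs hx)
      exact le_trans (Finset.inf'_le _ hy) (hVal y y.2 x hxy hx i hi)

end Aux

/-- Lemma 2.8 (matrix core): for a continuous `2π`-periodic positive semidefinite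
Hermitian matrix function `M`, constant rank is equivalent to the two-sided estimate
`C⁻¹ M ≤ M² ≤ C M` on the fundamental domain. -/
theorem stmt8 {d r : ℕ} (M : ℝ × Rd d → Matrix (Fin r) (Fin r) ℂ)
    (hcont : Continuous M)
    (hper : ∀ (ξ : ℝ × Rd d) (k₁ : ℤ) (k₂ : Fin d → ℤ),
      M (ξ.1 + 2 * Real.pi * (k₁:ℝ), ξ.2 + (2 * Real.pi) • (fun i => (k₂ i : ℝ))) = M ξ)
    (hpsd : ∀ ξ, (M ξ).PosSemidef) :
    (∀ ξ η : ℝ × Rd d, (M ξ).rank = (M η).rank) ↔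
      ∃ C : ℝ, 0 < C ∧ ∀ ξ ∈ (Set.Icc (-Real.pi) Real.pi ×ˢ
          Set.Icc (fun _ => -Real.pi : Rd d) (fun _ => Real.pi)),
        matLE ((C⁻¹ : ℝ) • M ξ) (M ξ * M ξ) ∧ matLE (M ξ * M ξ) ((C : ℝ) • M ξ) := by
  constructor
  · -- constant rank implies the two-sided bound
    intro hrk
    have hDcomp : IsCompact (Set.Icc (-Real.pi) Real.pi ×ˢ
        Set.Icc (fun _ => -Real.pi : Rd d) (fun _ => Real.pi)) :=
      isCompact_Icc.prod isCompact_Icc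
    have hDne : (Set.Icc (-Real.pi) Real.pi ×ˢ
        Set.Icc (fun _ => -Real.pi : Rd d) (fun _ => Real.pi)).Nonempty := by
      have hπ := Real.pi_pos
      exact ⟨((0:ℝ), fun _ => (0:ℝ)), ⟨⟨by dsimp only; linarith, by dsimp only; linarith⟩,
        ⟨fun i => by dsimp only; linarith, fun i => by dsimp only; linarith⟩⟩⟩
    obtain ⟨c, T, hc, hwin⟩ := Aux.unif_window hcont hpsd hrk hDcomp hDne
    set C : ℝ := max T (1 / c) with hCdef
    have hC0 : 0 < C := lt_of_lt_of_le (by positivity) (le_max_right T (1 / c))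
    have hTC : T ≤ C := le_max_left _ _
    have h1c : 1 ≤ C * c := by
      have := le_max_right T (1 / c)
      rw [div_le_iff₀ hc] at this
      linarith
    have hCinv : C⁻¹ ≤ c := by
      have hCC : C⁻¹ * C = 1 := inv_mul_cancel₀ (ne_of_gt hC0)
      nlinarith [inv_pos.mpr hC0]
    refine ⟨C, hC0, fun ξ hξ => ?_⟩
    constructor
    · refine (Aux.matLE_smul_sq (hpsd ξ).1).mpr fun i => ?_
      rcases eq_or_ne ((hpsd ξ).1.eigenvalues i) 0 with h0 | h0
      · rw [h0]; ring_nf; exact le_refl _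
      · have h1 := (hwin ξ hξ i).2 h0
        have h2 := (hpsd ξ).eigenvalues_nonneg i
        nlinarith
    · refine (Aux.matLE_sq_smul (hpsd ξ).1).mpr fun i => ?_
      have h1 := (hwin ξ hξ i).1
      have h2 := (hpsd ξ).eigenvalues_nonneg i
      nlinarith
  · -- two-sided bound implies constant rank
    rintro ⟨C, hC, hbd⟩ ξ η
    set C₁ : ℝ := max C 1 with hC₁def
    have hC₁1 : 1 ≤ C₁ := le_max_right _ _
    have hC₁0 : 0 < C₁ := lt_of_lt_of_le one_pos hC₁1
    have heig : ∀ ζ (i : Fin r), (hpsd ζ).1.eigenvalues i = 0 ∨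
        (C₁⁻¹ ≤ (hpsd ζ).1.eigenvalues i ∧ (hpsd ζ).1.eigenvalues i ≤ C₁) := by
      intro ζ i
      obtain ⟨ζ', hζ'D, hMeq⟩ := Aux.reduce M hper ζ
      have hb := hbd ζ' hζ'D
      rw [hMeq] at hb
      have h1 := (Aux.matLE_smul_sq (hpsd ζ).1).mp hb.1 i
      have h2 := (Aux.matLE_sq_smul (hpsd ζ).1).mp hb.2 i
      set lam := (hpsd ζ).1.eigenvalues i with hlam
      have hnn : 0 ≤ lam := (hpsd ζ).eigenvalues_nonneg i
      rcases eq_or_ne lam 0 with h0 | h0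
      · exact Or.inl h0
      · right
        have hlampos : 0 < lam := lt_of_le_of_ne hnn (Ne.symm h0)
        have hCC₁ : C ≤ C₁ := le_max_left _ _
        have hinv : C₁⁻¹ ≤ C⁻¹ := by
          apply inv_anti₀ hC hCC₁
        have hCinvlam : C⁻¹ ≤ lam := by nlinarith [inv_pos.mpr hC]
        constructor
        · linarith
        · nlinarith
    have hlc := Aux.rank_locallyConstant hcont hpsd hC₁1 heig
    exact hlc.apply_eq_of_preconnectedSpace ξ η
end
end

section
/- Let 1 ≤ p ≤ ∞, f ∈ L^p(R^d) and g ∈ 𝓛^∞(R^d), where ‖g‖_{𝓛^∞} = ess sup_{x∈[0,1]^d} Σ_{j∈Z^d} |g(x+j)|. Then the sequence c(j) = ∫_{R^d} f(x) g(x−j) dx belongs to ℓ^p(Z^d) and ‖c‖_{ℓ^p} ≤ ‖f‖_{L^p} ‖g‖_{𝓛^∞}. -/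
open MeasureTheory ENNReal

noncomputable section

/-- the amalgam norm `‖g‖_{𝓛^∞} = ess sup_{x∈[0,1]^d} Σ_{j∈ℤ^d} |g(x+j)|` -/
def amalInf {d : ℕ} (g : Rd d → ℂ) : ℝ≥0∞ :=
  essSup (fun x => ∑' j : Zd d, (‖g (x + zcast j)‖₊ : ℝ≥0∞))
    (volume.restrict (Set.Icc (0 : Rd d) 1))

namespace Stmt19Aux

variable {d : ℕ}

/-- the periodization of `‖g‖` -/
def per (g : Rd d → ℂ) (x : Rd d) : ℝ≥0∞ := ∑' j : Zd d, (‖g (x + zcast j)‖₊ : ℝ≥0∞)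

lemma amalInf_eq (g : Rd d → ℂ) :
    amalInf g = essSup (per g) (volume.restrict (Set.Icc (0 : Rd d) 1)) := rfl

lemma zcast_add (j k : Zd d) : zcast (j + k) = zcast j + zcast k := by
  funext i; simp [zcast]

lemma zcast_neg (j : Zd d) : zcast (-j) = - zcast j := by
  funext i; simp [zcast]

lemma per_measurable {g : Rd d → ℂ} (hg : Measurable g) : Measurable (per g) :=
  Measurable.ennreal_tsum fun j => (hg.comp (measurable_add_const (zcast j))).nnnorm.coe_nnreal_ennreal

lemma per_periodic (g : Rd d → ℂ) (x : Rd d) (k : Zd d) :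
    per g (x + zcast k) = per g x := by
  have h := (Equiv.addLeft k).tsum_eq (fun j : Zd d => (‖g (x + zcast j)‖₊ : ℝ≥0∞))
  rw [per, per, ← h]
  exact tsum_congr fun j => by rw [Equiv.coe_addLeft, zcast_add, add_assoc]

lemma per_sub (g : Rd d → ℂ) (x : Rd d) :
    ∑' j : Zd d, (‖g (x - zcast j)‖₊ : ℝ≥0∞) = per g x := by
  have h := (Equiv.neg (Zd d)).tsum_eq (fun j : Zd d => (‖g (x - zcast j)‖₊ : ℝ≥0∞))
  rw [per, ← h]
  exact tsum_congr fun j => by rw [Equiv.neg_apply, zcast_neg, sub_neg_eq_add]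

/-- fundamental cube `[0,1)^d` -/
def box (d : ℕ) : Set (Rd d) := Set.univ.pi fun _ => Set.Ico (0 : ℝ) 1

lemma box_measurable : MeasurableSet (box d) :=
  MeasurableSet.univ_pi fun _ => measurableSet_Ico

lemma box_subset_Icc : box d ⊆ Set.Icc (0 : Rd d) 1 := by
  rw [← Set.pi_univ_Icc]
  exact Set.pi_mono fun i _ => Set.Ico_subset_Icc_self

lemma volume_box : volume (box d) = 1 := by
  rw [box, volume_pi_pi]
  simp [Real.volume_Ico]

/-- the tile `k + [0,1)^d` -/
def tile (k : Zd d) : Set (Rd d) := Set.univ.pi fun i => Set.Ico (k i : ℝ) (k i + 1)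

lemma tile_measurable (k : Zd d) : MeasurableSet (tile k) :=
  MeasurableSet.univ_pi fun _ => measurableSet_Ico

lemma iUnion_tile : (⋃ k : Zd d, tile k) = Set.univ := by
  ext x
  simp only [Set.mem_iUnion, Set.mem_univ, iff_true, tile, Set.mem_pi, Set.mem_Ico]
  exact ⟨fun i => ⌊x i⌋, fun i _ => ⟨Int.floor_le _, Int.lt_floor_add_one _⟩⟩

lemma tile_disjoint : Pairwise (Function.onFun Disjoint (tile (d := d))) := by
  intro k k' hkk'
  rw [Function.onFun, Set.disjoint_left]
  intro x hx hx'
  apply hkk'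
  funext i
  have h1 := hx i (Set.mem_univ i)
  have h2 := hx' i (Set.mem_univ i)
  simp only [Set.mem_Ico] at h1 h2
  have e1 : ⌊x i⌋ = k i := Int.floor_eq_iff.mpr ⟨h1.1, h1.2⟩
  have e2 : ⌊x i⌋ = k' i := Int.floor_eq_iff.mpr ⟨h2.1, h2.2⟩
  rw [← e1, ← e2]

lemma preimage_tile (k : Zd d) : (fun x : Rd d => x + zcast k) ⁻¹' tile k = box d := by
  ext x
  simp only [Set.mem_preimage, tile, box, Set.mem_pi, Set.mem_Ico, Set.mem_univ, true_implies]
  constructor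
  · intro h i
    have := h i
    simp only [Pi.add_apply, zcast] at this
    constructor <;> linarith [this.1, this.2]
  · intro h i
    have := h i
    simp only [Pi.add_apply, zcast]
    constructor <;> linarith [this.1, this.2]

/-- unfolding a Lebesgue integral over `ℝ^d` along the tiles -/
lemma lintegral_eq_box (h : Rd d → ℝ≥0∞) (hm : Measurable h) :
    ∫⁻ x, h x = ∫⁻ x in box d, ∑' k : Zd d, h (x + zcast k) := by
  have h1 : ∫⁻ x, h x = ∑' k : Zd d, ∫⁻ x in tile k, h x := by
    rw [← lintegral_iUnion tile_measurable tile_disjoint, iUnion_tile, Measure.restrict_univ]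
  have h2 : ∀ k : Zd d, ∫⁻ x in tile k, h x = ∫⁻ x in box d, h (x + zcast k) := by
    intro k
    rw [← (measurePreserving_add_right volume (zcast k)).setLIntegral_comp_preimage_emb
      (measurableEmbedding_addRight (zcast k)) h (tile k), preimage_tile]
  rw [h1]
  simp_rw [h2]
  exact (lintegral_tsum (f := fun (k : Zd d) (x : Rd d) => h (x + zcast k)) fun k =>
    (hm.comp (measurable_add_const (zcast k))).aemeasurable).symm

lemma per_ae_le_box {g : Rd d → ℂ} :
    ∀ᵐ x ∂(volume.restrict (box d)), per g x ≤ amalInf g := by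
  have h0 : ∀ᵐ x ∂(volume.restrict (Set.Icc (0 : Rd d) 1)), per g x ≤ amalInf g := by
    rw [amalInf_eq]
    exact ENNReal.ae_le_essSup (per g)
  exact ae_restrict_of_ae_restrict_of_subset box_subset_Icc h0

/-- the periodization is a.e. bounded by the amalgam norm, globally -/
lemma per_ae_le {g : Rd d → ℂ} (hg : Measurable g) :
    ∀ᵐ x : Rd d, per g x ≤ amalInf g := by
  set A := amalInf g with hA
  set N := {x : Rd d | A < per g x} with hN
  have hNm : MeasurableSet N := measurableSet_lt measurable_const (per_measurable hg)
  have key : volume N = 0 := by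
    rw [← lintegral_indicator_one hNm,
      lintegral_eq_box _ ((measurable_one (α := ℝ≥0∞)).indicator hNm)]
    have hz : ∀ᵐ x ∂(volume.restrict (box d)),
        ∑' k : Zd d, N.indicator (1 : Rd d → ℝ≥0∞) (x + zcast k) = 0 := by
      filter_upwards [per_ae_le_box (g := g)] with x hx
      have hxN : ∀ k : Zd d, (x + zcast k) ∉ N := by
        intro k
        simp only [hN, Set.mem_setOf_eq, not_lt, per_periodic]
        exact hx
      have : ∀ k : Zd d, N.indicator (1 : Rd d → ℝ≥0∞) (x + zcast k) = 0 :=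
        fun k => Set.indicator_of_notMem (hxN k) 1
      simp [this]
    rw [lintegral_congr_ae hz, lintegral_zero]
  rw [ae_iff]
  have : {x : Rd d | ¬ per g x ≤ A} = N := by
    ext x; simp [hN, not_le]
  rwa [this]

/-- `‖g‖_{L^1} ≤ ‖g‖_{𝓛^∞}` -/
lemma lintegral_nnnorm_le {g : Rd d → ℂ} (hg : Measurable g) :
    ∫⁻ x : Rd d, (‖g x‖₊ : ℝ≥0∞) ≤ amalInf g := by
  rw [lintegral_eq_box _ hg.nnnorm.coe_nnreal_ennreal]
  calc ∫⁻ x in box d, ∑' k : Zd d, (‖g (x + zcast k)‖₊ : ℝ≥0∞)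
      ≤ ∫⁻ _ in box d, amalInf g := lintegral_mono_ae per_ae_le_box
    _ = amalInf g * volume (box d) := setLIntegral_const _ _
    _ = amalInf g := by rw [volume_box, mul_one]

end Stmt19Aux

open Stmt19Aux

/-- Lemma 2.5 (Aldroubi–Sun–Tang): `‖(∫ f(x) g(x−j) dx)_j‖_{ℓ^p} ≤ ‖f‖_{L^p} ‖g‖_{𝓛^∞}`. -/
theorem stmt19 {d : ℕ} (p : ℝ≥0∞) (hp : 1 ≤ p)
    (f g : Rd d → ℂ) (hf : Measurable f) (hg : Measurable g)
    (hfp : eLpNorm f p volume ≠ ∞) (hgA : amalInf g ≠ ∞) :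
    dnorm p (fun j : Zd d => (‖∫ x : Rd d, f x * g (x - zcast j)‖₊ : ℝ≥0∞))
      ≤ eLpNorm f p volume * amalInf g := by
  set A := amalInf g with hA
  set F : Rd d → ℝ≥0∞ := fun x => (‖f x‖₊ : ℝ≥0∞) with hF
  set G : Zd d → Rd d → ℝ≥0∞ := fun j x => (‖g (x - zcast j)‖₊ : ℝ≥0∞) with hG
  have hGmeas : ∀ j : Zd d, Measurable (G j) := fun j =>
    (hg.comp (measurable_sub_const (zcast j))).nnnorm.coe_nnreal_ennreal
  have hcle : ∀ j : Zd d, (‖∫ x : Rd d, f x * g (x - zcast j)‖₊ : ℝ≥0∞)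
      ≤ ∫⁻ x : Rd d, F x * G j x := by
    intro j
    refine le_trans (enorm_integral_le_lintegral_enorm _) (le_of_eq ?_)
    refine lintegral_congr fun x => ?_
    simp [hF, hG, nnnorm_mul]
    rfl
  have hGint : ∀ j : Zd d, ∫⁻ x, G j x = ∫⁻ x : Rd d, (‖g x‖₊ : ℝ≥0∞) := by
    intro j
    have := lintegral_add_right_eq_self (μ := (volume : Measure (Rd d)))
      (fun x => (‖g x‖₊ : ℝ≥0∞)) (-(zcast j))
    simpa [hG, sub_eq_add_neg] using this
  have hGA : ∀ j : Zd d, ∫⁻ x, G j x ≤ A := fun j =>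
    (hGint j).le.trans (lintegral_nnnorm_le hg)
  rcases eq_or_ne p ∞ with hptop | hptop
  · -- p = ∞
    subst hptop
    rw [dnorm, if_pos rfl]
    refine iSup_le fun j => ?_
    calc (‖∫ x : Rd d, f x * g (x - zcast j)‖₊ : ℝ≥0∞)
        ≤ ∫⁻ x, F x * G j x := hcle j
      _ ≤ ∫⁻ x, eLpNorm f ∞ volume * G j x := by
          refine lintegral_mono_ae ?_
          have hae : ∀ᵐ x : Rd d, F x ≤ eLpNorm f ∞ volume := by
            rw [eLpNorm_exponent_top, eLpNormEssSup]
            exact ENNReal.ae_le_essSup _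
          filter_upwards [hae] with x hx
          exact mul_le_mul_left hx _
      _ = eLpNorm f ∞ volume * ∫⁻ x, G j x := lintegral_const_mul _ (hGmeas j)
      _ ≤ eLpNorm f ∞ volume * A := mul_le_mul_right (hGA j) _
  · -- p < ∞
    have hp0 : p ≠ 0 := (lt_of_lt_of_le zero_lt_one hp).ne'
    set r := p.toReal with hr
    have hr1 : 1 ≤ r := by
      have := ENNReal.toReal_mono hptop hp
      simpa using this
    have hr0 : 0 < r := lt_of_lt_of_le zero_lt_one hr1
    rw [dnorm, if_neg hptop]
    -- key pointwise claim
    have key : ∀ j : Zd d, (‖∫ x : Rd d, f x * g (x - zcast j)‖₊ : ℝ≥0∞) ^ r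
        ≤ A ^ (r - 1) * ∫⁻ x, F x ^ r * G j x := by
      intro j
      rcases eq_or_lt_of_le hr1 with hre | hrlt
      · -- r = 1
        rw [← hre]
        simp only [sub_self, ENNReal.rpow_zero, one_mul, ENNReal.rpow_one]
        exact hcle j
      · -- 1 < r : Hölder
        set q := Real.conjExponent r with hq
        have hconj : r.HolderConjugate q := Real.HolderConjugate.conjExponent hrlt
        have hq0 : 0 ≤ 1 / q := hconj.symm.one_div_nonneg
        have hr0' : 0 ≤ 1 / r := hconj.one_div_nonneg
        have hsplit : ∀ x : Rd d, F x * G j x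
            = (F x * G j x ^ (1 / r)) * (G j x ^ (1 / q)) := by
          intro x
          rw [mul_assoc, ← ENNReal.rpow_add_of_nonneg _ _ hr0' hq0]
          rw [show 1 / r + 1 / q = 1 by
            rw [one_div, one_div]; exact hconj.inv_add_inv_eq_one]
          rw [ENNReal.rpow_one]
        have holder : ∫⁻ x, F x * G j x
            ≤ (∫⁻ x, F x ^ r * G j x) ^ (1 / r) * (∫⁻ x, G j x) ^ (1 / q) := by
          have hH := ENNReal.lintegral_mul_le_Lp_mul_Lq (volume : Measure (Rd d)) hconj
            (f := fun x => F x * G j x ^ (1 / r)) (g := fun x => G j x ^ (1 / q))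
            ((hf.nnnorm.coe_nnreal_ennreal.mul ((hGmeas j).pow_const _)).aemeasurable)
            (((hGmeas j).pow_const _).aemeasurable)
          have e1 : ∀ x : Rd d, (F x * G j x ^ (1 / r)) ^ r = F x ^ r * G j x := by
            intro x
            rw [ENNReal.mul_rpow_of_nonneg _ _ hr0.le, ← ENNReal.rpow_mul,
              one_div_mul_cancel hr0.ne', ENNReal.rpow_one]
          have e2 : ∀ x : Rd d, (G j x ^ (1 / q)) ^ q = G j x := by
            intro x
            rw [← ENNReal.rpow_mul, one_div_mul_cancel hconj.symm.ne_zero,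
              ENNReal.rpow_one]
          calc ∫⁻ x, F x * G j x
              = ∫⁻ x, (fun x => F x * G j x ^ (1 / r)) x * (fun x => G j x ^ (1 / q)) x := by
                refine lintegral_congr fun x => ?_
                exact hsplit x
            _ ≤ (∫⁻ x, (F x * G j x ^ (1 / r)) ^ r) ^ (1 / r)
                * (∫⁻ x, (G j x ^ (1 / q)) ^ q) ^ (1 / q) := hH
            _ = (∫⁻ x, F x ^ r * G j x) ^ (1 / r) * (∫⁻ x, G j x) ^ (1 / q) := by
                rw [lintegral_congr e1, lintegral_congr e2]
        calc (‖∫ x : Rd d, f x * g (x - zcast j)‖₊ : ℝ≥0∞) ^ r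
            ≤ ((∫⁻ x, F x ^ r * G j x) ^ (1 / r) * (∫⁻ x, G j x) ^ (1 / q)) ^ r :=
              ENNReal.rpow_le_rpow ((hcle j).trans holder) hr0.le
          _ = (∫⁻ x, F x ^ r * G j x) * ((∫⁻ x, G j x) ^ (1 / q)) ^ r := by
              rw [ENNReal.mul_rpow_of_nonneg _ _ hr0.le, ← ENNReal.rpow_mul,
                one_div_mul_cancel hr0.ne', ENNReal.rpow_one]
          _ ≤ (∫⁻ x, F x ^ r * G j x) * (A ^ (1 / q)) ^ r := by
              refine mul_le_mul_right ?_ _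
              exact ENNReal.rpow_le_rpow (ENNReal.rpow_le_rpow (hGA j) hq0) hr0.le
          _ = A ^ (r - 1) * ∫⁻ x, F x ^ r * G j x := by
              rw [← ENNReal.rpow_mul, mul_comm]
              congr 1
              rw [show 1 / q * r = r / q by ring, hconj.div_conj_eq_sub_one]
    -- sum over j
    have hFrm : Measurable fun x : Rd d => F x ^ r := hf.nnnorm.coe_nnreal_ennreal.pow_const r
    have hsum : ∑' j : Zd d, ∫⁻ x, F x ^ r * G j x = ∫⁻ x, F x ^ r * per g x := by
      rw [← lintegral_tsum (f := fun j x => F x ^ r * G j x) fun j => (hFrm.mul (hGmeas j)).aemeasurable]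
      refine lintegral_congr fun x => ?_
      rw [ENNReal.tsum_mul_left, per_sub]
    have hsum_le : ∫⁻ x, F x ^ r * per g x ≤ A * ∫⁻ x, F x ^ r := by
      calc ∫⁻ x, F x ^ r * per g x ≤ ∫⁻ x, F x ^ r * A := by
            refine lintegral_mono_ae ?_
            filter_upwards [per_ae_le hg] with x hx
            exact mul_le_mul_right hx _
        _ = A * ∫⁻ x, F x ^ r := by
            simp_rw [mul_comm]
            exact lintegral_const_mul _ hFrm
    have hFr_eq : ∫⁻ x, F x ^ r = eLpNorm f p volume ^ r := by
      rw [eLpNorm_eq_lintegral_rpow_enorm_toReal hp0 hptop, ← ENNReal.rpow_mul,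
        one_div_mul_cancel hr0.ne', ENNReal.rpow_one]
      rfl
    have total : ∑' j : Zd d, (‖∫ x : Rd d, f x * g (x - zcast j)‖₊ : ℝ≥0∞) ^ r
        ≤ A ^ r * eLpNorm f p volume ^ r := by
      calc ∑' j : Zd d, (‖∫ x : Rd d, f x * g (x - zcast j)‖₊ : ℝ≥0∞) ^ r
          ≤ ∑' j : Zd d, A ^ (r - 1) * ∫⁻ x, F x ^ r * G j x := ENNReal.tsum_le_tsum key
        _ = A ^ (r - 1) * ∑' j : Zd d, ∫⁻ x, F x ^ r * G j x := ENNReal.tsum_mul_left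
        _ = A ^ (r - 1) * ∫⁻ x, F x ^ r * per g x := by rw [hsum]
        _ ≤ A ^ (r - 1) * (A * ∫⁻ x, F x ^ r) := mul_le_mul_right hsum_le _
        _ = A ^ r * eLpNorm f p volume ^ r := by
            rw [hFr_eq, ← mul_assoc]
            congr 1
            rw [show A ^ (r - 1) * A = A ^ (r - 1) * A ^ (1 : ℝ) by rw [ENNReal.rpow_one],
              ← ENNReal.rpow_add_of_nonneg _ _ (by linarith) zero_le_one, sub_add_cancel]
    calc (∑' j : Zd d, (‖∫ x : Rd d, f x * g (x - zcast j)‖₊ : ℝ≥0∞) ^ r) ^ (1 / r)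
        ≤ (A ^ r * eLpNorm f p volume ^ r) ^ (1 / r) :=
          ENNReal.rpow_le_rpow total (by positivity)
      _ = eLpNorm f p volume * A := by
          rw [ENNReal.mul_rpow_of_nonneg _ _ (by positivity), ← ENNReal.rpow_mul,
            ← ENNReal.rpow_mul, mul_one_div_cancel hr0.ne', ENNReal.rpow_one,
            ENNReal.rpow_one, mul_comm]
end
end
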